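/- (Convergence of RoleSim iteration) Let the iteration be R^{k+1}(u,v) = (1−β)·w_k(u,v)/max(N_u,N_v) + β, where w_k(u,v) is the maximum weight of a matching between N(u) and N(v) under weights R^k. If D_k denotes the maximum over all pairs (u,v) of |R^{k+1}(u,v) − R^k(u,v)|, then D_{k+1} ≤ (1−β)·D_k; consequently D_k ≤ (1−β)^k·D_0 → 0 and the iteration converges for every pair. -/

import Mathlib

def IsMatching {α β : Type*} (A : Finset α) (B : Finset β) (M : Finset (α × β)) : Prop :=
  (∀ p ∈ M, p.1 ∈ A ∧ p.2 ∈ B) ∧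
  (∀ p ∈ M, ∀ q ∈ M, p.1 = q.1 → p = q) ∧
  (∀ p ∈ M, ∀ q ∈ M, p.2 = q.2 → p = q)

def matchWeight {α β : Type*} (r : α → β → ℝ) (M : Finset (α × β)) : ℝ :=
  ∑ p ∈ M, r p.1 p.2

lemma matching_card_le {α β : Type*} (A : Finset α) (B : Finset β) (M : Finset (α × β))
    (h : IsMatching A B M) : M.card ≤ A.card := by
  classical
  have hinj : Set.InjOn Prod.fst (M : Set (α × β)) := by
    intro p hp q hq hpq
    exact h.2.1 p hp q hq hpq
  calc M.card = (M.image Prod.fst).card := (Finset.card_image_of_injOn hinj).symm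
    _ ≤ A.card := Finset.card_le_card (by
        intro a ha
        obtain ⟨p, hp, rfl⟩ := Finset.mem_image.mp ha
        exact (h.1 p hp).1)

lemma matchWeight_diff {α β : Type*} (r s : α → β → ℝ) (M : Finset (α × β)) (C : ℝ)
    (hC : ∀ p ∈ M, |r p.1 p.2 - s p.1 p.2| ≤ C) :
    |matchWeight r M - matchWeight s M| ≤ M.card * C := by
  unfold matchWeight
  rw [← Finset.sum_sub_distrib]
  calc |∑ p ∈ M, (r p.1 p.2 - s p.1 p.2)| ≤ ∑ p ∈ M, |r p.1 p.2 - s p.1 p.2| :=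
        Finset.abs_sum_le_sum_abs _ _
    _ ≤ ∑ _p ∈ M, C := Finset.sum_le_sum hC
    _ = M.card * C := by rw [Finset.sum_const, nsmul_eq_mul]

theorem stmt_12 {V : Type*} [Fintype V] (G : SimpleGraph V) [DecidableRel G.Adj]
    (hnbr : ∀ v : V, (G.neighborFinset v).Nonempty)
    (β : ℝ) (hβ : 0 < β) (hβ1 : β < 1)
    (R : ℕ → V → V → ℝ)
    (hR0 : ∀ u v, β ≤ R 0 u v ∧ R 0 u v ≤ 1)
    (w : ℕ → V → V → ℝ)
    (hw : ∀ k u v, IsGreatest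
      {x | ∃ M, IsMatching (G.neighborFinset u) (G.neighborFinset v) M ∧
        x = matchWeight (R k) M} (w k u v))
    (hiter : ∀ k u v,
      R (k + 1) u v = (1 - β) * w k u v / (max (G.degree u) (G.degree v) : ℕ) + β)
    (D : ℕ → ℝ)
    (hD : ∀ k, IsGreatest {x | ∃ u v : V, x = |R (k + 1) u v - R k u v|} (D k)) :
    (∀ k, D (k + 1) ≤ (1 - β) * D k) ∧
    (∀ k, D k ≤ (1 - β) ^ k * D 0) ∧
    (∀ u v : V, ∃ L : ℝ, Filter.Tendsto (fun k => R k u v) Filter.atTop (nhds L)) := by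
  have hβ' : (0:ℝ) ≤ 1 - β := by linarith
  have hDnn : ∀ k, 0 ≤ D k := by
    intro k
    obtain ⟨u, v, h⟩ := (hD k).1
    rw [h]; exact abs_nonneg _
  have hRD : ∀ k u v, |R (k + 1) u v - R k u v| ≤ D k := fun k u v =>
    (hD k).2 ⟨u, v, rfl⟩
  -- bound on w differences
  have hwdiff : ∀ k u v, |w (k+1) u v - w k u v| ≤ (max (G.degree u) (G.degree v) : ℕ) * D k := by
    intro k u v
    set B : ℝ := ((max (G.degree u) (G.degree v) : ℕ) : ℝ) * D k with hB
    have key : ∀ M, IsMatching (G.neighborFinset u) (G.neighborFinset v) M →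
        |matchWeight (R (k+1)) M - matchWeight (R k) M| ≤ B := by
      intro M hM
      have h1 : |matchWeight (R (k+1)) M - matchWeight (R k) M| ≤ M.card * D k :=
        matchWeight_diff _ _ _ _ (fun p _ => hRD k p.1 p.2)
      refine h1.trans ?_
      apply mul_le_mul_of_nonneg_right _ (hDnn k)
      have hc : M.card ≤ G.degree u := by
        simpa [SimpleGraph.card_neighborFinset_eq_degree] using
          matching_card_le _ _ _ hM
      exact_mod_cast hc.trans (le_max_left _ _)
    rw [abs_sub_le_iff]
    constructor
    · obtain ⟨M, hM, hMw⟩ := (hw (k+1) u v).1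
      have h2 : matchWeight (R k) M ≤ w k u v := (hw k u v).2 ⟨M, hM, rfl⟩
      have h3 := key M hM
      rw [abs_sub_le_iff] at h3
      linarith [hMw ▸ h3.1]
    · obtain ⟨M, hM, hMw⟩ := (hw k u v).1
      have h2 : matchWeight (R (k+1)) M ≤ w (k+1) u v := (hw (k+1) u v).2 ⟨M, hM, rfl⟩
      have h3 := key M hM
      rw [abs_sub_le_iff] at h3
      linarith [hMw ▸ h3.2]
  have hdegpos : ∀ u v : V, (0:ℝ) < ((max (G.degree u) (G.degree v) : ℕ) : ℝ) := by
    intro u v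
    have : 0 < G.degree u := by
      rw [← SimpleGraph.card_neighborFinset_eq_degree]
      exact Finset.card_pos.mpr (hnbr u)
    have : 0 < max (G.degree u) (G.degree v) := lt_of_lt_of_le this (le_max_left _ _)
    exact_mod_cast this
  have hstep : ∀ k, D (k + 1) ≤ (1 - β) * D k := by
    intro k
    obtain ⟨u, v, hDk⟩ := (hD (k+1)).1
    rw [hDk, hiter (k+1) u v, hiter k u v]
    set m : ℝ := ((max (G.degree u) (G.degree v) : ℕ) : ℝ) with hm
    have hmpos := hdegpos u v
    have : (1 - β) * w (k+1) u v / m + β - ((1 - β) * w k u v / m + β)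
        = (1 - β) / m * (w (k+1) u v - w k u v) := by
      field_simp
      ring
    rw [this, abs_mul]
    have h1 : |(1 - β) / m| = (1 - β) / m := abs_of_nonneg (div_nonneg hβ' hmpos.le)
    rw [h1]
    calc (1 - β) / m * |w (k+1) u v - w k u v| ≤ (1 - β) / m * (m * D k) := by
          apply mul_le_mul_of_nonneg_left (hwdiff k u v) (div_nonneg hβ' hmpos.le)
      _ = (1 - β) * D k := by
        have hm0 : m ≠ 0 := hmpos.ne'
        rw [← mul_assoc, div_mul_cancel₀ _ hm0]
  have hgeo : ∀ k, D k ≤ (1 - β) ^ k * D 0 := by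
    intro k
    induction k with
    | zero => simp
    | succ n ih =>
      calc D (n+1) ≤ (1 - β) * D n := hstep n
        _ ≤ (1 - β) * ((1 - β) ^ n * D 0) := mul_le_mul_of_nonneg_left ih hβ'
        _ = (1 - β) ^ (n+1) * D 0 := by ring
  refine ⟨hstep, hgeo, ?_⟩
  intro u v
  have hcauchy : CauchySeq (fun k => R k u v) := by
    apply cauchySeq_of_le_geometric (1 - β) (D 0) (by linarith)
    intro n
    rw [Real.dist_eq, abs_sub_comm]
    calc |R (n+1) u v - R n u v| ≤ D n := hRD n u v
      _ ≤ (1 - β) ^ n * D 0 := hgeo n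
      _ = D 0 * (1 - β) ^ n := by ring
  exact cauchySeq_tendsto_of_complete hcauchy
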